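/- Let σ > 0, η ≠ 0, and real constants r̄ ≥ r̲, μ̄¹ ≥ μ̲¹, μ̄² ≥ μ̲². Define f : ℝ³ → ℝ by f(y,z,c) = −r̲ (y − z/σ − c/η)^+ + r̄ (y − z/σ − c/η)^− − μ̲¹ z^+/σ + μ̄¹ z^−/σ − μ̲² (c/η)^+ + μ̄² (c/η)^−. Then its convex conjugate f*(α,β,γ) = sup over (y,z,c) ∈ ℝ³ of [αy + βz + γc − f(y,z,c)] satisfies: f*(α,β,γ) = 0 if −r̄ ≤ α ≤ −r̲, −μ̄¹ ≤ α + σβ ≤ −μ̲¹, and −μ̄² ≤ α + ηγ ≤ −μ̲²; and f*(α,β,γ) = +∞ otherwise. In particular, the effective domain of f* is the set D = {(α,β,γ) ∈ ℝ³ : −r̄ ≤ α ≤ −r̲, −μ̄¹ ≤ α + σβ ≤ −μ̲¹, −μ̄² ≤ α + ηγ ≤ −μ̲²}. -/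

import Mathlib

open scoped EReal

noncomputable section

/-- The bid-ask generator `f(y,z,c)` of the American option example. -/
def bidaskGenerator (σ η rl rh μ1l μ1h μ2l μ2h : ℝ) (q : ℝ × ℝ × ℝ) : ℝ :=
  -rl * max (q.1 - q.2.1 / σ - q.2.2 / η) 0
    + rh * max (-(q.1 - q.2.1 / σ - q.2.2 / η)) 0
    - μ1l * max q.2.1 0 / σ + μ1h * max (-q.2.1) 0 / σ
    - μ2l * max (q.2.2 / η) 0 + μ2h * max (-(q.2.2 / η)) 0

/-- The convex conjugate `f*(α,β,γ) = sup_{(y,z,c)} [α y + β z + γ c − f(y,z,c)]`,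
with values in `EReal`. -/
def bidaskConjugate (σ η rl rh μ1l μ1h μ2l μ2h : ℝ) (p : ℝ × ℝ × ℝ) : EReal :=
  ⨆ q : ℝ × ℝ × ℝ,
    ((p.1 * q.1 + p.2.1 * q.2.1 + p.2.2 * q.2.2
      - bidaskGenerator σ η rl rh μ1l μ1h μ2l μ2h q : ℝ) : EReal)

private def bidaskG (a l h t : ℝ) : ℝ := a * t + l * max t 0 - h * max (-t) 0

private lemma bidaskG_nonpos {a l h : ℝ} (h1 : -h ≤ a) (h2 : a ≤ -l) (t : ℝ) :
    bidaskG a l h t ≤ 0 := by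
  rcases le_total 0 t with ht | ht
  · have : max (-t) 0 = 0 := max_eq_right (by linarith)
    simp only [bidaskG, this, max_eq_left ht]
    nlinarith
  · have : max t 0 = 0 := max_eq_right (by linarith)
    simp only [bidaskG, this, max_eq_left (by linarith : (0:ℝ) ≤ -t)]
    nlinarith

private lemma bidaskG_zero (a l h : ℝ) : bidaskG a l h 0 = 0 := by simp [bidaskG]

private lemma bidaskG_unbounded {a l h : ℝ} (hlh : ¬ (-h ≤ a ∧ a ≤ -l)) (M : ℝ) :
    ∃ t : ℝ, M ≤ bidaskG a l h t := by
  push_neg at hlh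
  rcases lt_or_ge a (-h) with hc | hc
  · have hah : a + h < 0 := by linarith
    refine ⟨min (M / (a + h)) 0, ?_⟩
    have ht0 : min (M / (a + h)) 0 ≤ 0 := min_le_right _ _
    have : max (min (M / (a + h)) 0) 0 = 0 := max_eq_right ht0
    simp only [bidaskG, this, max_eq_left (by linarith : (0:ℝ) ≤ -min (M / (a + h)) 0)]
    have h2 : (a + h) * min (M / (a + h)) 0 ≥ M := by
      have := min_le_left (M / (a + h)) 0
      have h3 : (a + h) * min (M / (a + h)) 0 ≥ (a + h) * (M / (a + h)) :=
        mul_le_mul_of_nonpos_left this (le_of_lt hah)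
      rwa [mul_div_cancel₀ _ (ne_of_lt hah)] at h3
    nlinarith
  · have hal : -l < a := hlh hc
    have hal' : 0 < a + l := by linarith
    refine ⟨max (M / (a + l)) 0, ?_⟩
    have ht0 : 0 ≤ max (M / (a + l)) 0 := le_max_right _ _
    have h0 : max (-(max (M / (a + l)) 0)) 0 = 0 := max_eq_right (by linarith)
    simp only [bidaskG, h0, max_eq_left ht0]
    have h2 : (a + l) * max (M / (a + l)) 0 ≥ M := by
      have := le_max_left (M / (a + l)) 0
      have h3 : (a + l) * (M / (a + l)) ≤ (a + l) * max (M / (a + l)) 0 :=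
        mul_le_mul_of_nonneg_left this (le_of_lt hal')
      rwa [mul_div_cancel₀ _ (ne_of_gt hal')] at h3
    nlinarith

private lemma bidask_decomp (σ η : ℝ) (hσ : 0 < σ) (hη : η ≠ 0)
    (rl rh μ1l μ1h μ2l μ2h : ℝ) (p q : ℝ × ℝ × ℝ) :
    p.1 * q.1 + p.2.1 * q.2.1 + p.2.2 * q.2.2
      - bidaskGenerator σ η rl rh μ1l μ1h μ2l μ2h q
    = bidaskG p.1 rl rh (q.1 - q.2.1 / σ - q.2.2 / η)
      + bidaskG (p.1 + σ * p.2.1) μ1l μ1h (q.2.1 / σ)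
      + bidaskG (p.1 + η * p.2.2) μ2l μ2h (q.2.2 / η) := by
  have hσ' : σ ≠ 0 := ne_of_gt hσ
  have h1 : max q.2.1 0 / σ = max (q.2.1 / σ) 0 := by
    rw [← max_div_div_right (le_of_lt hσ) q.2.1 0, zero_div]
  have h2 : max (-q.2.1) 0 / σ = max (-(q.2.1 / σ)) 0 := by
    rw [← max_div_div_right (le_of_lt hσ) (-q.2.1) 0, zero_div, neg_div]
  have e1 : p.2.1 * q.2.1 = (σ * p.2.1) * (q.2.1 / σ) := by field_simp
  have e2 : p.2.2 * q.2.2 = (η * p.2.2) * (q.2.2 / η) := by field_simp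
  simp only [bidaskGenerator, bidaskG, mul_div_assoc, h1, h2]
  rw [e1, e2]
  have e3 : p.1 * q.1 = p.1 * (q.1 - q.2.1 / σ - q.2.2 / η) + p.1 * (q.2.1 / σ)
      + p.1 * (q.2.2 / η) := by ring
  rw [e3]; ring

/-- **The convex conjugate of the bid-ask generator.**
For `σ > 0`, `η ≠ 0`, `r̲ ≤ r̄`, `μ̲¹ ≤ μ̄¹`, `μ̲² ≤ μ̄²`: the conjugate `f*` equals `0` on
`D = {(α,β,γ) : −r̄ ≤ α ≤ −r̲, −μ̄¹ ≤ α + σβ ≤ −μ̲¹, −μ̄² ≤ α + ηγ ≤ −μ̲²}` and `+∞`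
off `D`; in particular the effective domain of `f*` is `D`. -/
theorem bidask_conjugate_eq (σ η : ℝ) (hσ : 0 < σ) (hη : η ≠ 0)
    (rl rh μ1l μ1h μ2l μ2h : ℝ) (hr : rl ≤ rh) (hμ1 : μ1l ≤ μ1h) (hμ2 : μ2l ≤ μ2h) :
    (∀ p : ℝ × ℝ × ℝ,
      ((-rh ≤ p.1 ∧ p.1 ≤ -rl ∧ -μ1h ≤ p.1 + σ * p.2.1 ∧ p.1 + σ * p.2.1 ≤ -μ1l ∧
          -μ2h ≤ p.1 + η * p.2.2 ∧ p.1 + η * p.2.2 ≤ -μ2l) →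
        bidaskConjugate σ η rl rh μ1l μ1h μ2l μ2h p = 0) ∧
      (¬ (-rh ≤ p.1 ∧ p.1 ≤ -rl ∧ -μ1h ≤ p.1 + σ * p.2.1 ∧ p.1 + σ * p.2.1 ≤ -μ1l ∧
          -μ2h ≤ p.1 + η * p.2.2 ∧ p.1 + η * p.2.2 ≤ -μ2l) →
        bidaskConjugate σ η rl rh μ1l μ1h μ2l μ2h p = ⊤)) ∧
    {p : ℝ × ℝ × ℝ | bidaskConjugate σ η rl rh μ1l μ1h μ2l μ2h p ≠ ⊤}
      = {p : ℝ × ℝ × ℝ | -rh ≤ p.1 ∧ p.1 ≤ -rl ∧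
          -μ1h ≤ p.1 + σ * p.2.1 ∧ p.1 + σ * p.2.1 ≤ -μ1l ∧
          -μ2h ≤ p.1 + η * p.2.2 ∧ p.1 + η * p.2.2 ≤ -μ2l} := by
  have hη' := hη
  have main : ∀ p : ℝ × ℝ × ℝ,
      ((-rh ≤ p.1 ∧ p.1 ≤ -rl ∧ -μ1h ≤ p.1 + σ * p.2.1 ∧ p.1 + σ * p.2.1 ≤ -μ1l ∧
          -μ2h ≤ p.1 + η * p.2.2 ∧ p.1 + η * p.2.2 ≤ -μ2l) →
        bidaskConjugate σ η rl rh μ1l μ1h μ2l μ2h p = 0) ∧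
      (¬ (-rh ≤ p.1 ∧ p.1 ≤ -rl ∧ -μ1h ≤ p.1 + σ * p.2.1 ∧ p.1 + σ * p.2.1 ≤ -μ1l ∧
          -μ2h ≤ p.1 + η * p.2.2 ∧ p.1 + η * p.2.2 ≤ -μ2l) →
        bidaskConjugate σ η rl rh μ1l μ1h μ2l μ2h p = ⊤) := by
    intro p
    constructor
    · rintro ⟨ha1, ha2, hb1, hb2, hc1, hc2⟩
      apply le_antisymm
      · apply iSup_le
        intro q
        rw [show (0 : EReal) = ((0 : ℝ) : EReal) from rfl, EReal.coe_le_coe_iff,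
          bidask_decomp σ η hσ hη rl rh μ1l μ1h μ2l μ2h p q]
        have g1 := bidaskG_nonpos ha1 ha2 (q.1 - q.2.1 / σ - q.2.2 / η)
        have g2 := bidaskG_nonpos hb1 hb2 (q.2.1 / σ)
        have g3 := bidaskG_nonpos hc1 hc2 (q.2.2 / η)
        linarith
      · have h0 : p.1 * (0:ℝ) + p.2.1 * (0:ℝ) + p.2.2 * (0:ℝ)
            - bidaskGenerator σ η rl rh μ1l μ1h μ2l μ2h ((0:ℝ), (0:ℝ), (0:ℝ)) = 0 := by
          rw [bidask_decomp σ η hσ hη rl rh μ1l μ1h μ2l μ2h p ((0:ℝ), (0:ℝ), (0:ℝ))]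
          simp [bidaskG_zero]
        calc (0 : EReal) = ((p.1 * (0:ℝ) + p.2.1 * (0:ℝ) + p.2.2 * (0:ℝ)
              - bidaskGenerator σ η rl rh μ1l μ1h μ2l μ2h ((0:ℝ), (0:ℝ), (0:ℝ)) : ℝ) : EReal) := by
              rw [h0]; rfl
          _ ≤ _ := le_iSup (fun q : ℝ × ℝ × ℝ =>
              ((p.1 * q.1 + p.2.1 * q.2.1 + p.2.2 * q.2.2
                - bidaskGenerator σ η rl rh μ1l μ1h μ2l μ2h q : ℝ) : EReal)) ((0:ℝ), (0:ℝ), (0:ℝ))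
    · intro hD
      rw [EReal.eq_top_iff_forall_lt]
      intro M
      have key : ∃ q : ℝ × ℝ × ℝ, M + 1 ≤ p.1 * q.1 + p.2.1 * q.2.1 + p.2.2 * q.2.2
          - bidaskGenerator σ η rl rh μ1l μ1h μ2l μ2h q := by
        by_cases h1 : -rh ≤ p.1 ∧ p.1 ≤ -rl
        · by_cases h2 : -μ1h ≤ p.1 + σ * p.2.1 ∧ p.1 + σ * p.2.1 ≤ -μ1l
          · by_cases h3 : -μ2h ≤ p.1 + η * p.2.2 ∧ p.1 + η * p.2.2 ≤ -μ2l
            · exact absurd ⟨h1.1, h1.2, h2.1, h2.2, h3.1, h3.2⟩ hD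
            · obtain ⟨t, ht⟩ := bidaskG_unbounded h3 (M + 1)
              refine ⟨(t, 0, η * t), ?_⟩
              rw [bidask_decomp σ η hσ hη rl rh μ1l μ1h μ2l μ2h p (t, 0, η * t)]
              have hq : η * t / η = t := by field_simp
              simp only [hq, zero_div]
              rw [show t - 0 - t = 0 by ring, bidaskG_zero, bidaskG_zero]
              linarith
          · obtain ⟨t, ht⟩ := bidaskG_unbounded h2 (M + 1)
            refine ⟨(t, σ * t, 0), ?_⟩
            rw [bidask_decomp σ η hσ hη rl rh μ1l μ1h μ2l μ2h p (t, σ * t, 0)]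
            have hq : σ * t / σ = t := by field_simp
            simp only [hq, zero_div]
            rw [show t - t - 0 = 0 by ring, bidaskG_zero, bidaskG_zero]
            linarith
        · obtain ⟨t, ht⟩ := bidaskG_unbounded h1 (M + 1)
          refine ⟨(t, 0, 0), ?_⟩
          rw [bidask_decomp σ η hσ hη rl rh μ1l μ1h μ2l μ2h p (t, 0, 0)]
          simp only [zero_div]
          rw [show t - 0 - 0 = t by ring, bidaskG_zero, bidaskG_zero]
          linarith
      obtain ⟨q, hq⟩ := key
      calc (M : EReal) < ((M + 1 : ℝ) : EReal) := by
            exact_mod_cast (by linarith : M < M + 1)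
        _ ≤ ((p.1 * q.1 + p.2.1 * q.2.1 + p.2.2 * q.2.2
              - bidaskGenerator σ η rl rh μ1l μ1h μ2l μ2h q : ℝ) : EReal) := by
            exact_mod_cast hq
        _ ≤ _ := le_iSup (fun q : ℝ × ℝ × ℝ =>
              ((p.1 * q.1 + p.2.1 * q.2.1 + p.2.2 * q.2.2
                - bidaskGenerator σ η rl rh μ1l μ1h μ2l μ2h q : ℝ) : EReal)) q
  refine ⟨main, ?_⟩
  ext p
  simp only [Set.mem_setOf_eq]
  constructor
  · intro hne
    by_contra hD
    exact hne ((main p).2 hD)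
  · intro hD
    rw [(main p).1 hD]
    simp
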